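/- Let T > 0, κ ≥ 0, and let g : [0,T] → [0,∞) be measurable with ∫₀ᵀ g(t) dt < ∞. Let (f_n)_{n≥0} be non-negative measurable functions on [0,T] with sup_{t∈[0,T]} f_0(t) < ∞, satisfying f_{n+1}(t) ≤ κ ∫₀ᵗ f_n(s) g(t−s) ds for every n ≥ 0 and t ∈ [0,T]. Then Σ_{n≥0} (sup_{t∈[0,T]} f_n(t))^{1/2} < ∞. -/

import Mathlib

open MeasureTheory Set

private lemma sqrt_add_le {x y : ℝ} (hx : 0 ≤ x) (hy : 0 ≤ y) :
    Real.sqrt (x + y) ≤ Real.sqrt x + Real.sqrt y := by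
  have h := Real.sqrt_le_sqrt (show x + y ≤ (Real.sqrt x + Real.sqrt y) ^ 2 by
    nlinarith [Real.sq_sqrt hx, Real.sq_sqrt hy, Real.sqrt_nonneg x, Real.sqrt_nonneg y])
  rwa [Real.sqrt_sq (by positivity)] at h

private lemma sqrt_sum_le {ι : Type*} (s : Finset ι) (f : ι → ℝ) (h : ∀ i ∈ s, 0 ≤ f i) :
    Real.sqrt (∑ i ∈ s, f i) ≤ ∑ i ∈ s, Real.sqrt (f i) := by
  induction s using Finset.cons_induction with
  | empty => simp
  | cons a s ha ih =>
    rw [Finset.sum_cons, Finset.sum_cons]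
    refine le_trans (sqrt_add_le (h a (Finset.mem_cons_self a s))
      (Finset.sum_nonneg fun i hi => h i (Finset.mem_cons_of_mem hi))) ?_
    exact add_le_add_right (ih fun i hi => h i (Finset.mem_cons_of_mem hi)) _

private lemma sqrt_pow' {x : ℝ} (hx : 0 ≤ x) (n : ℕ) :
    Real.sqrt (x ^ n) = Real.sqrt x ^ n := by
  induction n with
  | zero => simp
  | succ n ih => rw [pow_succ, pow_succ, Real.sqrt_mul (by positivity), ih]

private lemma sqrt_mul_le_half {a b : ℝ} (ha : 0 ≤ a) (hb : 0 ≤ b) :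
    Real.sqrt (a * b) ≤ (a + b) / 2 := by
  rw [Real.sqrt_mul ha]
  nlinarith [Real.sq_sqrt ha, Real.sq_sqrt hb, Real.sqrt_nonneg a, Real.sqrt_nonneg b,
    sq_nonneg (Real.sqrt a - Real.sqrt b)]

private lemma pascal_id (B t : ℝ) (n : ℕ) :
    B * (∑ k ∈ Finset.range (n + 1),
        (n.choose k : ℝ) * (4 : ℝ)⁻¹ ^ (n - k) * B ^ k * (t ^ (k + 1) / ((k : ℝ) + 1)) /
          (Nat.factorial k : ℝ))
      + (4 : ℝ)⁻¹ * (∑ k ∈ Finset.range (n + 1),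
        (n.choose k : ℝ) * (4 : ℝ)⁻¹ ^ (n - k) * B ^ k * t ^ k / (Nat.factorial k : ℝ))
    = ∑ k ∈ Finset.range (n + 2),
        ((n + 1).choose k : ℝ) * (4 : ℝ)⁻¹ ^ (n + 1 - k) * B ^ k * t ^ k /
          (Nat.factorial k : ℝ) := by
  set q : ℕ → ℝ := fun j => (4 : ℝ)⁻¹ ^ (n + 1 - j) * B ^ j * t ^ j / (Nat.factorial j : ℝ)
    with hq
  have h1 : B * (∑ k ∈ Finset.range (n + 1),
      (n.choose k : ℝ) * (4 : ℝ)⁻¹ ^ (n - k) * B ^ k * (t ^ (k + 1) / ((k : ℝ) + 1)) /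
        (Nat.factorial k : ℝ)) = ∑ k ∈ Finset.range (n + 1), (n.choose k : ℝ) * q (k + 1) := by
    rw [Finset.mul_sum]
    refine Finset.sum_congr rfl fun k hk => ?_
    rw [hq]
    simp only [Nat.succ_sub_succ, Nat.factorial_succ]
    push_cast
    field_simp
    ring
  have h2 : (4 : ℝ)⁻¹ * (∑ k ∈ Finset.range (n + 1),
      (n.choose k : ℝ) * (4 : ℝ)⁻¹ ^ (n - k) * B ^ k * t ^ k / (Nat.factorial k : ℝ))
      = ∑ k ∈ Finset.range (n + 1), (n.choose k : ℝ) * q k := by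
    rw [Finset.mul_sum]
    refine Finset.sum_congr rfl fun k hk => ?_
    have hk' : k ≤ n := Nat.lt_succ_iff.mp (Finset.mem_range.mp hk)
    rw [hq]
    simp only
    rw [show n + 1 - k = (n - k) + 1 by omega, pow_succ]
    ring
  have h3 : ∑ k ∈ Finset.range (n + 2),
      ((n + 1).choose k : ℝ) * (4 : ℝ)⁻¹ ^ (n + 1 - k) * B ^ k * t ^ k /
        (Nat.factorial k : ℝ) = ∑ k ∈ Finset.range (n + 2), ((n + 1).choose k : ℝ) * q k := by
    refine Finset.sum_congr rfl fun k _ => ?_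
    rw [hq]; ring
  rw [h1, h2, h3, Finset.sum_range_succ' (fun k => ((n + 1).choose k : ℝ) * q k) (n + 1)]
  have h4 : ∀ k, (((n + 1).choose (k + 1) : ℕ) : ℝ) = (n.choose k : ℝ) + (n.choose (k + 1) : ℝ) := by
    intro k; rw [Nat.choose_succ_succ]; push_cast; ring
  have h5 : ∑ k ∈ Finset.range (n + 1), ((n + 1).choose (k + 1) : ℝ) * q (k + 1)
      = ∑ k ∈ Finset.range (n + 1), (n.choose k : ℝ) * q (k + 1)
        + ∑ k ∈ Finset.range (n + 1), (n.choose (k + 1) : ℝ) * q (k + 1) := by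
    rw [← Finset.sum_add_distrib]
    refine Finset.sum_congr rfl fun k _ => ?_
    rw [h4]; ring
  have h6 : ∑ k ∈ Finset.range (n + 1), (n.choose k : ℝ) * q k
      = ∑ k ∈ Finset.range (n + 1), (n.choose (k + 1) : ℝ) * q (k + 1)
        + ((n + 1).choose 0 : ℝ) * q 0 := by
    rw [Finset.sum_range_succ' (fun k => (n.choose k : ℝ) * q k) n,
      Finset.sum_range_succ (fun k => (n.choose (k + 1) : ℝ) * q (k + 1)) n]
    simp [Nat.choose_succ_self]
  rw [h5, h6]
  ring

theorem stmt_5 (T : ℝ) (hT : 0 < T) (κ : ℝ) (hκ : 0 ≤ κ)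
    (g : ℝ → ℝ) (hg_meas : Measurable g)
    (hg_nonneg : ∀ t ∈ Icc (0 : ℝ) T, 0 ≤ g t)
    (hg_int : IntegrableOn g (Icc (0 : ℝ) T))
    (f : ℕ → ℝ → ℝ) (hf_meas : ∀ n, Measurable (f n))
    (hf_nonneg : ∀ n, ∀ t ∈ Icc (0 : ℝ) T, 0 ≤ f n t)
    (hf0_bdd : BddAbove (f 0 '' Icc (0 : ℝ) T))
    (hrec : ∀ n, ∀ t ∈ Icc (0 : ℝ) T,
      f (n + 1) t ≤ κ * ∫ s in Icc (0 : ℝ) t, f n s * g (t - s)) :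
    Summable (fun n : ℕ => (sSup (f n '' Icc (0 : ℝ) T)) ^ ((1 : ℝ) / 2)) := by
  -- Step A: choose K with κ * ∫ (g - min g K) ≤ 1/4
  obtain ⟨K, hK0, hKsmall⟩ :
      ∃ K : ℝ, 0 ≤ K ∧ κ * ∫ x in Icc (0 : ℝ) T, (g x - min (g x) K) ≤ 1 / 4 := by
    have hconv : Filter.Tendsto
        (fun n : ℕ => κ * ∫ x in Icc (0 : ℝ) T, (g x - min (g x) (n : ℝ)))
        Filter.atTop (nhds 0) := by
      have h0 : Filter.Tendsto
          (fun n : ℕ => ∫ x in Icc (0 : ℝ) T, (g x - min (g x) (n : ℝ)))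
          Filter.atTop (nhds (∫ x in Icc (0 : ℝ) T, (0 : ℝ))) := by
        apply tendsto_integral_of_dominated_convergence (fun x => |g x|)
        · exact fun n =>
            ((hg_meas.sub (hg_meas.min measurable_const)).aestronglyMeasurable)
        · exact hg_int.abs
        · intro n
          refine (ae_restrict_iff' measurableSet_Icc).2
            (Filter.Eventually.of_forall fun x hx => ?_)
          have h0x := hg_nonneg x hx
          have hmin0 : 0 ≤ min (g x) (n : ℝ) := le_min h0x (Nat.cast_nonneg n)
          have hminle : min (g x) (n : ℝ) ≤ g x := min_le_left _ _
          rw [Real.norm_eq_abs, abs_of_nonneg (by linarith), abs_of_nonneg h0x]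
          linarith
        · refine Filter.Eventually.of_forall fun x => ?_
          have hev : ∀ᶠ n : ℕ in Filter.atTop, g x - min (g x) (n : ℝ) = 0 := by
            filter_upwards [Filter.eventually_ge_atTop ⌈g x⌉₊] with n hn
            have : g x ≤ (n : ℝ) := le_trans (Nat.le_ceil _) (by exact_mod_cast hn)
            simp [min_eq_left this]
          exact Filter.Tendsto.congr' (hev.mono fun n h => h.symm) tendsto_const_nhds
      simpa using h0.const_mul κ
    have := (hconv.eventually_lt_const (by norm_num : (0 : ℝ) < 1 / 4)).exists
    obtain ⟨n, hn⟩ := this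
    exact ⟨(n : ℝ), Nat.cast_nonneg n, hn.le⟩
  set M := sSup (f 0 '' Icc (0 : ℝ) T) with hM
  have h0mem : (0 : ℝ) ∈ Icc (0 : ℝ) T := ⟨le_refl _, hT.le⟩
  have hf0le : ∀ t ∈ Icc (0 : ℝ) T, f 0 t ≤ M := fun t ht => le_csSup hf0_bdd ⟨t, ht, rfl⟩
  have hM0 : 0 ≤ M := le_trans (hf_nonneg 0 0 h0mem) (hf0le 0 h0mem)
  set B := κ * K with hB
  have hB0 : 0 ≤ B := mul_nonneg hκ hK0
  set g2 : ℝ → ℝ := fun x => g x - min (g x) K with hg2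
  have hg2_nonneg : ∀ x, 0 ≤ g2 x := fun x => sub_nonneg.2 (min_le_left _ _)
  have hg2_meas : Measurable g2 := hg_meas.sub (hg_meas.min measurable_const)
  have hg1_int : IntegrableOn (fun x => min (g x) K) (Icc (0 : ℝ) T) := by
    have hconst : IntegrableOn (fun _ : ℝ => |K|) (Icc (0 : ℝ) T) :=
      integrableOn_const measure_Icc_lt_top.ne
    refine Integrable.mono' (hg_int.abs.add hconst)
      ((hg_meas.min measurable_const).aestronglyMeasurable) ?_
    refine Filter.Eventually.of_forall fun x => ?_
    simp only [Pi.add_apply]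
    rw [Real.norm_eq_abs]
    rcases min_cases (g x) K with ⟨h1, _⟩ | ⟨h1, _⟩ <;> rw [h1]
    · linarith [le_abs_self (g x), abs_nonneg K]
    · linarith [le_abs_self K, abs_nonneg (g x)]
  have hg2_int : IntegrableOn g2 (Icc (0 : ℝ) T) := hg_int.sub hg1_int
  set P : ℕ → ℝ → ℝ := fun n t => ∑ k ∈ Finset.range (n + 1),
      (n.choose k : ℝ) * (4 : ℝ)⁻¹ ^ (n - k) * B ^ k * t ^ k / (Nat.factorial k : ℝ)
    with hP
  have hP_nonneg : ∀ n t, 0 ≤ t → 0 ≤ P n t := by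
    intro n t ht
    refine Finset.sum_nonneg fun k _ => ?_
    positivity
  have hP_mono : ∀ n ⦃s t : ℝ⦄, 0 ≤ s → s ≤ t → P n s ≤ P n t := by
    intro n s t hs hst
    refine Finset.sum_le_sum fun k _ => ?_
    gcongr
  have hP_cont : ∀ n, Continuous (P n) := by
    intro n
    exact continuous_finset_sum _ fun k _ => by fun_prop
  -- Main induction
  have key : ∀ n, ∀ t ∈ Icc (0 : ℝ) T, f n t ≤ M * P n t := by
    intro n
    induction n with
    | zero =>
      intro t ht
      have : P 0 t = 1 := by simp [hP]
      rw [this, mul_one]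
      exact hf0le t ht
    | succ n ih =>
      intro t ht
      obtain ⟨ht0, htT⟩ := ht
      have htmem : t ∈ Icc (0 : ℝ) T := ⟨ht0, htT⟩
      have hsub : Icc (0 : ℝ) t ⊆ Icc (0 : ℝ) T := Icc_subset_Icc le_rfl htT
      have hmaps : ∀ s ∈ Icc (0 : ℝ) t, t - s ∈ Icc (0 : ℝ) t := fun s hs =>
        ⟨by linarith [hs.2], by linarith [hs.1]⟩
      have hgt_int : IntegrableOn (fun s => g (t - s)) (Icc (0 : ℝ) t) := by
        have h1 : IntervalIntegrable g volume 0 t :=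
          (intervalIntegrable_iff_integrableOn_Icc_of_le ht0).2 (hg_int.mono_set hsub)
        have h2 := h1.comp_sub_left t
        rw [sub_zero, sub_self] at h2
        exact (intervalIntegrable_iff_integrableOn_Icc_of_le ht0).1 h2.symm
      have hg2t_int : IntegrableOn (fun s => g2 (t - s)) (Icc (0 : ℝ) t) := by
        have h1 : IntervalIntegrable g2 volume 0 t :=
          (intervalIntegrable_iff_integrableOn_Icc_of_le ht0).2 (hg2_int.mono_set hsub)
        have h2 := h1.comp_sub_left t
        rw [sub_zero, sub_self] at h2
        exact (intervalIntegrable_iff_integrableOn_Icc_of_le ht0).1 h2.symm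
      have hPt0 : 0 ≤ M * P n t := mul_nonneg hM0 (hP_nonneg n t ht0)
      have hPbd : ∀ s ∈ Icc (0 : ℝ) t, 0 ≤ M * P n s ∧ M * P n s ≤ M * P n t := fun s hs =>
        ⟨mul_nonneg hM0 (hP_nonneg n s hs.1),
          mul_le_mul_of_nonneg_left (hP_mono n hs.1 hs.2) hM0⟩
      have hmeasP : Measurable fun s => M * P n s :=
        (continuous_const.mul (hP_cont n)).measurable
      have hgtmeas : Measurable fun s => g (t - s) :=
        hg_meas.comp (measurable_const.sub measurable_id)
      have hg2tmeas : Measurable fun s => g2 (t - s) :=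
        hg2_meas.comp (measurable_const.sub measurable_id)
      have hmaj : IntegrableOn (fun s => M * P n t * |g (t - s)|) (Icc (0 : ℝ) t) :=
        hgt_int.abs.const_mul _
      have hPg_int : IntegrableOn (fun s => M * P n s * g (t - s)) (Icc (0 : ℝ) t) := by
        refine Integrable.mono' hmaj (hmeasP.mul hgtmeas).aestronglyMeasurable ?_
        refine (ae_restrict_iff' measurableSet_Icc).2 (Filter.Eventually.of_forall fun s hs => ?_)
        rw [Real.norm_eq_abs, abs_mul, abs_of_nonneg (hPbd s hs).1]
        exact mul_le_mul_of_nonneg_right (hPbd s hs).2 (abs_nonneg _)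
      have hfg_int : IntegrableOn (fun s => f n s * g (t - s)) (Icc (0 : ℝ) t) := by
        refine Integrable.mono' hmaj ((hf_meas n).mul hgtmeas).aestronglyMeasurable ?_
        refine (ae_restrict_iff' measurableSet_Icc).2 (Filter.Eventually.of_forall fun s hs => ?_)
        rw [Real.norm_eq_abs, abs_mul, abs_of_nonneg (hf_nonneg n s (hsub hs))]
        exact mul_le_mul_of_nonneg_right ((ih s (hsub hs)).trans (hPbd s hs).2) (abs_nonneg _)
      have hPg2_int : IntegrableOn (fun s => M * P n s * g2 (t - s)) (Icc (0 : ℝ) t) := by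
        refine Integrable.mono' (hg2t_int.abs.const_mul (M * P n t))
          (hmeasP.mul hg2tmeas).aestronglyMeasurable ?_
        refine (ae_restrict_iff' measurableSet_Icc).2 (Filter.Eventually.of_forall fun s hs => ?_)
        rw [Real.norm_eq_abs, abs_mul, abs_of_nonneg (hPbd s hs).1]
        exact mul_le_mul_of_nonneg_right (hPbd s hs).2 (abs_nonneg _)
      have hPg1_int : IntegrableOn (fun s => M * P n s * min (g (t - s)) K) (Icc (0 : ℝ) t) := by
        have heq : (fun s => M * P n s * min (g (t - s)) K)
            = fun s => M * P n s * g (t - s) - M * P n s * g2 (t - s) := by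
          funext s; simp only [hg2]; ring
        rw [heq]; exact hPg_int.sub hPg2_int
      have step1 : (∫ s in Icc (0 : ℝ) t, f n s * g (t - s))
          ≤ ∫ s in Icc (0 : ℝ) t, M * P n s * g (t - s) := by
        refine setIntegral_mono_on hfg_int hPg_int measurableSet_Icc fun s hs => ?_
        exact mul_le_mul_of_nonneg_right (ih s (hsub hs)) (hg_nonneg _ (hsub (hmaps s hs)))
      have hsplit : (∫ s in Icc (0 : ℝ) t, M * P n s * g (t - s))
          = (∫ s in Icc (0 : ℝ) t, M * P n s * min (g (t - s)) K)
            + ∫ s in Icc (0 : ℝ) t, M * P n s * g2 (t - s) := by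
        rw [← integral_add hPg1_int hPg2_int]
        refine setIntegral_congr_fun measurableSet_Icc fun s _ => ?_
        simp only [hg2]; ring
      have hPK_int : IntegrableOn (fun s => M * P n s * K) (Icc (0 : ℝ) t) :=
        ((continuous_const.mul (hP_cont n)).mul continuous_const).integrableOn_Icc
      have bound1 : (∫ s in Icc (0 : ℝ) t, M * P n s * min (g (t - s)) K)
          ≤ ∫ s in Icc (0 : ℝ) t, M * P n s * K := by
        refine setIntegral_mono_on hPg1_int hPK_int measurableSet_Icc fun s hs => ?_
        exact mul_le_mul_of_nonneg_left (min_le_right _ _) (hPbd s hs).1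
      have bound2 : (∫ s in Icc (0 : ℝ) t, M * P n s * g2 (t - s))
          ≤ ∫ s in Icc (0 : ℝ) t, M * P n t * g2 (t - s) := by
        refine setIntegral_mono_on hPg2_int (hg2t_int.const_mul _) measurableSet_Icc fun s hs => ?_
        exact mul_le_mul_of_nonneg_right (hPbd s hs).2 (hg2_nonneg _)
      have hchg : (∫ s in Icc (0 : ℝ) t, g2 (t - s)) = ∫ s in Icc (0 : ℝ) t, g2 s := by
        rw [integral_Icc_eq_integral_Ioc, ← intervalIntegral.integral_of_le ht0,
          intervalIntegral.integral_comp_sub_left g2 t, sub_self, sub_zero,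
          intervalIntegral.integral_of_le ht0, ← integral_Icc_eq_integral_Ioc]
      have hmono2 : (∫ s in Icc (0 : ℝ) t, g2 s) ≤ ∫ s in Icc (0 : ℝ) T, g2 s :=
        setIntegral_mono_set hg2_int (Filter.Eventually.of_forall fun x => hg2_nonneg x)
          (HasSubset.Subset.eventuallyLE hsub)
      have hIntP : (∫ s in Icc (0 : ℝ) t, M * P n s * K)
          = M * K * ∑ k ∈ Finset.range (n + 1),
              (n.choose k : ℝ) * (4 : ℝ)⁻¹ ^ (n - k) * B ^ k * (t ^ (k + 1) / ((k : ℝ) + 1)) /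
                (Nat.factorial k : ℝ) := by
        have hfun : ∀ x : ℝ, M * P n x * K = ∑ k ∈ Finset.range (n + 1),
            M * K * ((n.choose k : ℝ) * (4 : ℝ)⁻¹ ^ (n - k) * B ^ k / (Nat.factorial k : ℝ))
              * x ^ k := by
          intro x
          rw [hP]
          simp only
          rw [Finset.mul_sum, Finset.sum_mul]
          exact Finset.sum_congr rfl fun k _ => by ring
        rw [integral_Icc_eq_integral_Ioc, ← intervalIntegral.integral_of_le ht0]
        simp_rw [hfun]
        rw [intervalIntegral.integral_finset_sum
          (fun k _ => Continuous.intervalIntegrable (by fun_prop) _ _)]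
        rw [Finset.mul_sum]
        refine Finset.sum_congr rfl fun k _ => ?_
        rw [intervalIntegral.integral_const_mul, integral_pow]
        rw [zero_pow (Nat.succ_ne_zero k)]
        ring
      have hfinal2 : (∫ s in Icc (0 : ℝ) t, M * P n t * g2 (t - s))
          ≤ M * P n t * ∫ s in Icc (0 : ℝ) T, g2 s := by
        rw [integral_const_mul, hchg]
        exact mul_le_mul_of_nonneg_left hmono2 hPt0
      have h7 := step1.trans hsplit.le
      have h8 := bound1.trans hIntP.le
      have h9 := bound2.trans hfinal2
      calc f (n + 1) t ≤ κ * ∫ s in Icc (0 : ℝ) t, f n s * g (t - s) := hrec n t htmem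
        _ ≤ κ * ((∫ s in Icc (0 : ℝ) t, M * P n s * min (g (t - s)) K)
              + ∫ s in Icc (0 : ℝ) t, M * P n s * g2 (t - s)) :=
            mul_le_mul_of_nonneg_left h7 hκ
        _ ≤ κ * ((M * K * ∑ k ∈ Finset.range (n + 1),
              (n.choose k : ℝ) * (4 : ℝ)⁻¹ ^ (n - k) * B ^ k * (t ^ (k + 1) / ((k : ℝ) + 1)) /
                (Nat.factorial k : ℝ)) + M * P n t * ∫ s in Icc (0 : ℝ) T, g2 s) :=
            mul_le_mul_of_nonneg_left (add_le_add h8 h9) hκ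
        _ = M * (B * ∑ k ∈ Finset.range (n + 1),
              (n.choose k : ℝ) * (4 : ℝ)⁻¹ ^ (n - k) * B ^ k * (t ^ (k + 1) / ((k : ℝ) + 1)) /
                (Nat.factorial k : ℝ)) + (M * P n t) * (κ * ∫ s in Icc (0 : ℝ) T, g2 s) := by
            rw [hB]; ring
        _ ≤ M * (B * ∑ k ∈ Finset.range (n + 1),
              (n.choose k : ℝ) * (4 : ℝ)⁻¹ ^ (n - k) * B ^ k * (t ^ (k + 1) / ((k : ℝ) + 1)) /
                (Nat.factorial k : ℝ)) + (M * P n t) * (1 / 4) :=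
            add_le_add_right (mul_le_mul_of_nonneg_left hKsmall hPt0) _
        _ = M * P (n + 1) t := by
            have hpas := pascal_id B t n
            simp only [hP]
            linear_combination M * hpas
    -- Conclusion: summability
  have hbdd : ∀ n, BddAbove (f n '' Icc (0 : ℝ) T) := by
    intro n
    refine ⟨M * P n T, fun y hy => ?_⟩
    obtain ⟨t, ht, rfl⟩ := hy
    exact (key n t ht).trans (mul_le_mul_of_nonneg_left (hP_mono n ht.1 ht.2) hM0)
  have ha_le : ∀ n, sSup (f n '' Icc (0 : ℝ) T) ≤ M * P n T := by
    intro n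
    refine csSup_le ⟨f n 0, 0, h0mem, rfl⟩ fun y hy => ?_
    obtain ⟨t, ht, rfl⟩ := hy
    exact (key n t ht).trans (mul_le_mul_of_nonneg_left (hP_mono n ht.1 ht.2) hM0)
  have ha0 : ∀ n, 0 ≤ sSup (f n '' Icc (0 : ℝ) T) := fun n =>
    le_trans (hf_nonneg n 0 h0mem) (le_csSup (hbdd n) ⟨0, h0mem, rfl⟩)
  set u : ℕ → ℝ := fun k => Real.sqrt ((2 * B * T) ^ k / (Nat.factorial k : ℝ)) with hu
  set v : ℕ → ℝ := fun j => (Real.sqrt 2 / 2) ^ j with hv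
  have hu_nonneg : ∀ k, 0 ≤ u k := fun k => Real.sqrt_nonneg _
  have hv_nonneg : ∀ j, 0 ≤ v j := fun j => pow_nonneg (by positivity) _
  have hu_sum : Summable u := by
    have hle : ∀ k, u k ≤ ((4 * B * T) ^ k / (Nat.factorial k : ℝ) + (2 : ℝ)⁻¹ ^ k) / 2 := by
      intro k
      have h1 : (2 * B * T) ^ k / (Nat.factorial k : ℝ)
          = ((4 * B * T) ^ k / (Nat.factorial k : ℝ)) * (2 : ℝ)⁻¹ ^ k := by
        rw [div_mul_eq_mul_div, ← mul_pow, show (4 : ℝ) * B * T * 2⁻¹ = 2 * B * T by ring]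
      rw [hu]
      simp only
      rw [h1]
      exact sqrt_mul_le_half (by positivity) (by positivity)
    refine Summable.of_nonneg_of_le hu_nonneg hle ?_
    exact ((Real.summable_pow_div_factorial (4 * B * T)).add
      (summable_geometric_of_lt_one (by norm_num) (by norm_num))).div_const 2
  have hsqrt2 : Real.sqrt 2 < 2 := by
    nlinarith [Real.sq_sqrt (by norm_num : (0 : ℝ) ≤ 2), Real.sqrt_nonneg 2]
  have hv_sum : Summable v :=
    summable_geometric_of_lt_one (by positivity) ((div_lt_one (by norm_num)).2 hsqrt2)
  have hS_sum : Summable (fun n => ∑ k ∈ Finset.range (n + 1), u k * v (n - k)) := by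
    have h1 : Summable fun k => ‖u k‖ :=
      hu_sum.congr fun k => (Real.norm_of_nonneg (hu_nonneg k)).symm
    have h2 : Summable fun k => ‖v k‖ :=
      hv_sum.congr fun k => (Real.norm_of_nonneg (hv_nonneg k)).symm
    exact (summable_norm_sum_mul_range_of_summable_norm h1 h2).of_norm
  have hterm : ∀ n, Real.sqrt (P n T) ≤ ∑ k ∈ Finset.range (n + 1), u k * v (n - k) := by
    intro n
    have h0 : Real.sqrt (P n T) ≤ ∑ k ∈ Finset.range (n + 1),
        Real.sqrt ((n.choose k : ℝ) * (4 : ℝ)⁻¹ ^ (n - k) * B ^ k * T ^ k /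
          (Nat.factorial k : ℝ)) := by
      simp only [hP]
      exact sqrt_sum_le _ _ fun k _ => by positivity
    refine h0.trans (Finset.sum_le_sum fun k hk => ?_)
    have hkn : k ≤ n := Nat.lt_succ_iff.mp (Finset.mem_range.mp hk)
    have hchoose : ((n.choose k : ℕ) : ℝ) ≤ (2 : ℝ) ^ n := by
      have h1 : n.choose k ≤ 2 ^ n := by
        calc n.choose k ≤ ∑ m ∈ Finset.range (n + 1), n.choose m :=
              Finset.single_le_sum (fun i _ => Nat.zero_le _) hk
          _ = 2 ^ n := Nat.sum_range_choose n
      exact_mod_cast h1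
    have hterm_eq : (n.choose k : ℝ) * (4 : ℝ)⁻¹ ^ (n - k) * B ^ k * T ^ k /
        (Nat.factorial k : ℝ)
        = (n.choose k : ℝ) * ((4 : ℝ)⁻¹ ^ (n - k) * (B ^ k * T ^ k / (Nat.factorial k : ℝ))) := by
      ring
    rw [hterm_eq, Real.sqrt_mul (Nat.cast_nonneg _), Real.sqrt_mul (by positivity)]
    have e1 : Real.sqrt ((4 : ℝ)⁻¹ ^ (n - k)) = (2 : ℝ)⁻¹ ^ (n - k) := by
      rw [sqrt_pow' (by norm_num), show ((4 : ℝ)⁻¹) = (2 : ℝ)⁻¹ ^ 2 by norm_num,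
        Real.sqrt_sq (by norm_num)]
    have e2 : Real.sqrt ((n.choose k : ℝ)) ≤ Real.sqrt 2 ^ n := by
      rw [← sqrt_pow' (by norm_num : (0 : ℝ) ≤ 2)]
      exact Real.sqrt_le_sqrt hchoose
    have e3 : u k = Real.sqrt 2 ^ k * Real.sqrt (B ^ k * T ^ k / (Nat.factorial k : ℝ)) := by
      rw [hu]
      simp only
      rw [show (2 * B * T) ^ k / (Nat.factorial k : ℝ)
          = 2 ^ k * (B ^ k * T ^ k / (Nat.factorial k : ℝ)) by rw [mul_pow, mul_pow]; ring,
        Real.sqrt_mul (by positivity), sqrt_pow' (by norm_num)]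
    have e4 : v (n - k) = Real.sqrt 2 ^ (n - k) * (2 : ℝ)⁻¹ ^ (n - k) := by
      rw [hv]
      simp only
      rw [div_eq_mul_inv, mul_pow]
    calc Real.sqrt ((n.choose k : ℝ))
          * (Real.sqrt ((4 : ℝ)⁻¹ ^ (n - k))
            * Real.sqrt (B ^ k * T ^ k / (Nat.factorial k : ℝ)))
        ≤ Real.sqrt 2 ^ n * ((2 : ℝ)⁻¹ ^ (n - k)
            * Real.sqrt (B ^ k * T ^ k / (Nat.factorial k : ℝ))) := by
          rw [e1]
          exact mul_le_mul_of_nonneg_right e2 (by positivity)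
      _ = u k * v (n - k) := by
          have e5 : Real.sqrt 2 ^ n = Real.sqrt 2 ^ k * Real.sqrt 2 ^ (n - k) := by
            rw [← pow_add, Nat.add_sub_cancel' hkn]
          rw [e3, e4, e5]
          ring
  refine Summable.of_nonneg_of_le (fun n => Real.rpow_nonneg (ha0 n) _) (fun n => ?_)
    (hS_sum.mul_left (Real.sqrt M))
  rw [← Real.sqrt_eq_rpow]
  calc Real.sqrt (sSup (f n '' Icc (0 : ℝ) T)) ≤ Real.sqrt (M * P n T) :=
        Real.sqrt_le_sqrt (ha_le n)
    _ = Real.sqrt M * Real.sqrt (P n T) := Real.sqrt_mul hM0 _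
    _ ≤ Real.sqrt M * ∑ k ∈ Finset.range (n + 1), u k * v (n - k) :=
        mul_le_mul_of_nonneg_left (hterm n) (Real.sqrt_nonneg M)
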